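/- Let σ be a play-measure of weight w. Then σ is victorious if and only if for every x < w there exists a victorious play-measure τ ≤ σ (pointwise) of weight at least x. -/

import Mathlib

open scoped ENNReal Classical

/-- Active-ending plays over signature `(K, ar)`: alternating sequences of
outputs `k : K` and inputs `i : ar k`. -/
inductive APlay (K : Type) (ar : K → Type) : Type
  | nil : APlay K ar
  | cons (k : K) (i : ar k) (s : APlay K ar) : APlay K ar

variable {K : Type} {ar : K → Type}

/-- Append an output-input pair at the end of an active-ending play. -/
def APlay.snoc : APlay K ar → (k : K) → ar k → APlay K ar
  | .nil, k, i => .cons k i .nil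
  | .cons l j s, k, i => .cons l j (s.snoc k i)

/-- The number of output-input cycles in an active-ending play. -/
def APlay.len : APlay K ar → ℕ
  | .nil => 0
  | .cons _ _ s => s.len + 1

/-- A play-measure: values in `[0,1]` on passive-ending plays (an active play
followed by an output), with `σ_act t = ∑_k σ_pass (t.k)` and
`σ_act (s.k.i) = σ_pass (s.k)`. -/
structure PlayMeasure (K : Type) (ar : K → Type) where
  pass : APlay K ar → K → ℝ≥0∞
  le_one : ∀ t, (∑' k, pass t k) ≤ 1
  consistent : ∀ s k (i : ar k), pass s k = ∑' l, pass (s.snoc k i) l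

/-- The value of a play-measure on an active-ending play. -/
noncomputable def PlayMeasure.act (σ : PlayMeasure K ar) (t : APlay K ar) : ℝ≥0∞ :=
  ∑' k, σ.pass t k

/-- The weight of a play-measure. -/
noncomputable def PlayMeasure.weight (σ : PlayMeasure K ar) : ℝ≥0∞ := σ.act .nil

/-- A partial counterstrategy, given by its set of active-ending plays. -/
structure Counterstrategy (K : Type) (ar : K → Type) where
  act : Set (APlay K ar)
  nil_mem : APlay.nil ∈ act
  prefix_closed : ∀ (s : APlay K ar) (k : K) (i : ar k), s.snoc k i ∈ act → s ∈ act
  deterministic : ∀ (s : APlay K ar) (k : K) (i j : ar k),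
      s.snoc k i ∈ act → s.snoc k j ∈ act → i = j

/-- The passive-ending play `s.k` is a `ρ`-failure: it is in `ρ_pass`
and has no prescribed input. -/
def Counterstrategy.Fails (ρ : Counterstrategy K ar) (s : APlay K ar) (k : K) : Prop :=
  s ∈ ρ.act ∧ ∀ i : ar k, s.snoc k i ∉ ρ.act

/-- `P^m_ρ(σ)`: the sum of `σ_act` over the length-`m` plays in `ρ_act`. -/
noncomputable def contProb (ρ : Counterstrategy K ar) (σ : PlayMeasure K ar) (m : ℕ) : ℝ≥0∞ :=
  ∑' s : {s : APlay K ar // s ∈ ρ.act ∧ s.len = m}, σ.act s.1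

/-- The sum of `σ_pass` over the `ρ`-failures of length `m`. -/
noncomputable def failProb (ρ : Counterstrategy K ar) (σ : PlayMeasure K ar) (m : ℕ) : ℝ≥0∞ :=
  ∑' p : {p : APlay K ar × K // ρ.Fails p.1 p.2 ∧ p.1.len = m}, σ.pass p.1.1 p.1.2

/-- A play-measure is victorious when against every partial counterstrategy,
the probability of play continuing forever is zero. -/
def Victorious (σ : PlayMeasure K ar) : Prop :=
  ∀ ρ : Counterstrategy K ar, (⨅ m, contProb ρ σ m) = 0

/-- The length-`n` prefix of an infinite play. -/
def prefixPlay (f : ℕ → Σ k : K, ar k) : ℕ → APlay K ar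
  | 0 => .nil
  | n + 1 => (prefixPlay f n).snoc (f n).1 (f n).2

/-- A play-measure is well-founded when no infinite play has all its
prefixes in the support. -/
def PlayMeasure.WellFoundedPM (σ : PlayMeasure K ar) : Prop :=
  ¬ ∃ f : ℕ → Σ k : K, ar k, ∀ n, 0 < σ.pass (prefixPlay f n) (f n).1

/-- A play-measure is finitely branching when each active-ending play has
finitely many possible next outputs in the support. -/
def PlayMeasure.FinBranch (σ : PlayMeasure K ar) : Prop :=
  ∀ t : APlay K ar, {k : K | 0 < σ.pass t k}.Finite

/-- Finitely founded: well-founded and finitely branching. -/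
def PlayMeasure.FinFounded (σ : PlayMeasure K ar) : Prop :=
  σ.WellFoundedPM ∧ σ.FinBranch

/-- `f` is uniformly below `g`: there is `d > 0` with `f s + d ≤ g s` on
every passive-ending play `s` in the support of `f`. -/
def UBelow (f g : APlay K ar → K → ℝ≥0∞) : Prop :=
  ∃ d : ℝ≥0∞, 0 < d ∧ ∀ s k, 0 < f s k → f s k + d ≤ g s k


section Aux

variable {K : Type} {ar : K → Type}

lemma APlay.len_snoc (s : APlay K ar) (k : K) (i : ar k) :
    (s.snoc k i).len = s.len + 1 := by
  induction s with
  | nil => rfl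
  | cons l j s ih => simp [APlay.snoc, APlay.len, ih]

lemma APlay.nil_or_snoc (s : APlay K ar) :
    s = .nil ∨ ∃ t k, ∃ i : ar k, s = APlay.snoc t k i := by
  induction s with
  | nil => exact Or.inl rfl
  | cons l j s ih =>
    right
    rcases ih with rfl | ⟨t, k, i, rfl⟩
    · exact ⟨.nil, l, j, rfl⟩
    · exact ⟨.cons l j t, k, i, rfl⟩

lemma snoc_det (ρ : Counterstrategy K ar) {t t' : APlay K ar} {k k' : K} {i : ar k} {i' : ar k'}
    (ht : t = t') (hk : k = k') (h1 : t.snoc k i ∈ ρ.act) (h2 : t'.snoc k' i' ∈ ρ.act) :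
    t.snoc k i = t'.snoc k' i' := by
  subst ht; subst hk
  rw [ρ.deterministic t k i i' h1 h2]

lemma exists_F (ρ : Counterstrategy K ar) (m : ℕ) :
    ∃ F : {s : APlay K ar // s ∈ ρ.act ∧ s.len = m + 1} →
        {t : APlay K ar // t ∈ ρ.act ∧ t.len = m} × K,
      Function.Injective F ∧
      ∀ (μ : PlayMeasure K ar) s, μ.act s.1 = μ.pass (F s).1.1 (F s).2 := by
  have hdec : ∀ s : {s : APlay K ar // s ∈ ρ.act ∧ s.len = m + 1},
      ∃ t k, ∃ i : ar k, s.1 = APlay.snoc t k i := by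
    rintro ⟨s, hs, hlen⟩
    rcases s.nil_or_snoc with rfl | ⟨t, k, i, rfl⟩
    · simp [APlay.len] at hlen
    · exact ⟨t, k, i, rfl⟩
  choose t k i hs using hdec
  have hmem : ∀ s, (t s).snoc (k s) (i s) ∈ ρ.act := fun s => hs s ▸ s.2.1
  have ht : ∀ s, t s ∈ ρ.act ∧ (t s).len = m := by
    intro s
    refine ⟨ρ.prefix_closed _ _ _ (hmem s), ?_⟩
    have h2 := s.2.2
    rw [hs s, APlay.len_snoc] at h2
    omega
  refine ⟨fun s => (⟨t s, ht s⟩, k s), ?_, ?_⟩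
  · intro s s' h
    have h1 : t s = t s' := congrArg (fun p => p.1.1) h
    have h2 : k s = k s' := congrArg Prod.snd h
    apply Subtype.ext
    rw [hs s, hs s']
    exact snoc_det ρ h1 h2 (hmem s) (hmem s')
  · intro μ s
    rw [hs s, PlayMeasure.act]
    exact (μ.consistent (t s) (k s) (i s)).symm

lemma contProb_eq_prod (ρ : Counterstrategy K ar) (μ : PlayMeasure K ar) (m : ℕ) :
    contProb ρ μ m = ∑' p : {t : APlay K ar // t ∈ ρ.act ∧ t.len = m} × K, μ.pass p.1.1 p.2 := by
  calc contProb ρ μ m = ∑' t : {t : APlay K ar // t ∈ ρ.act ∧ t.len = m}, ∑' k, μ.pass t.1 k :=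
        tsum_congr (fun _ => rfl)
    _ = _ := (ENNReal.tsum_prod (f := fun (t : {t : APlay K ar // t ∈ ρ.act ∧ t.len = m}) k =>
        μ.pass t.1 k)).symm

lemma contProb_succ_le (ρ : Counterstrategy K ar) (σ : PlayMeasure K ar) (m : ℕ) :
    contProb ρ σ (m + 1) ≤ contProb ρ σ m := by
  obtain ⟨F, hinj, hF⟩ := exists_F ρ m
  calc contProb ρ σ (m + 1) = ∑' s, σ.pass (F s).1.1 (F s).2 := tsum_congr (fun s => hF σ s)
    _ ≤ ∑' p : {t : APlay K ar // t ∈ ρ.act ∧ t.len = m} × K, σ.pass p.1.1 p.2 :=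
        ENNReal.tsum_comp_le_tsum_of_injective hinj _
    _ = contProb ρ σ m := (contProb_eq_prod ρ σ m).symm

lemma contProb_zero (ρ : Counterstrategy K ar) (μ : PlayMeasure K ar) :
    contProb ρ μ 0 = μ.weight := by
  have huniq : ∀ s : {s : APlay K ar // s ∈ ρ.act ∧ s.len = 0},
      s = ⟨.nil, ρ.nil_mem, rfl⟩ := by
    rintro ⟨s, hm, hl⟩
    cases s with
    | nil => rfl
    | cons k i s => simp [APlay.len] at hl
  rw [contProb, tsum_eq_single (⟨.nil, ρ.nil_mem, rfl⟩ :
      {s : APlay K ar // s ∈ ρ.act ∧ s.len = 0}) (fun b hb => absurd (huniq b) hb)]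
  rfl

lemma contProb_le_one (ρ : Counterstrategy K ar) (σ : PlayMeasure K ar) (m : ℕ) :
    contProb ρ σ m ≤ 1 := by
  induction m with
  | zero => rw [contProb_zero]; exact σ.le_one .nil
  | succ m ih => exact (contProb_succ_le ρ σ m).trans ih

lemma contProb_ne_top (ρ : Counterstrategy K ar) (σ : PlayMeasure K ar) (m : ℕ) :
    contProb ρ σ m ≠ ∞ :=
  ((contProb_le_one ρ σ m).trans_lt ENNReal.one_lt_top).ne

lemma key_ineq (ρ : Counterstrategy K ar) (σ τ : PlayMeasure K ar)
    (hle : ∀ s k, τ.pass s k ≤ σ.pass s k) (m : ℕ) :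
    contProb ρ σ (m + 1) + contProb ρ τ m ≤ contProb ρ τ (m + 1) + contProb ρ σ m := by
  obtain ⟨F, hinj, hF⟩ := exists_F ρ m
  set E := Set.range F with hE
  have hsum : ∀ μ : PlayMeasure K ar,
      contProb ρ μ (m + 1) = ∑' p : E, μ.pass p.1.1.1 p.1.2 := by
    intro μ
    rw [contProb, tsum_congr (fun s => hF μ s)]
    have h := (Equiv.ofInjective F hinj).tsum_eq (fun p : E => μ.pass p.1.1.1 p.1.2)
    simp only [Equiv.ofInjective_apply] at h
    exact h
  have hsplit : ∀ μ : PlayMeasure K ar,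
      contProb ρ μ m = (∑' p : E, μ.pass p.1.1.1 p.1.2) +
        ∑' p : (Eᶜ : Set _), μ.pass p.1.1.1 p.1.2 := by
    intro μ
    rw [contProb_eq_prod, ← Summable.tsum_add_tsum_compl (s := E) ENNReal.summable ENNReal.summable]
  have hcomp : (∑' p : (Eᶜ : Set _), τ.pass p.1.1.1 p.1.2)
      ≤ ∑' p : (Eᶜ : Set _), σ.pass p.1.1.1 p.1.2 :=
    ENNReal.tsum_le_tsum (fun p => hle _ _)
  rw [hsum σ, hsum τ, hsplit σ, hsplit τ,
    ← add_assoc, ← add_assoc, add_comm (∑' p : E, σ.pass p.1.1.1 p.1.2)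
      (∑' p : E, τ.pass p.1.1.1 p.1.2)]
  exact add_le_add_right hcomp _

lemma mixed_ineq (ρ : Counterstrategy K ar) (σ τ : PlayMeasure K ar)
    (hle : ∀ s k, τ.pass s k ≤ σ.pass s k) (m : ℕ) :
    contProb ρ σ m + τ.weight ≤ contProb ρ τ m + σ.weight := by
  induction m with
  | zero => rw [contProb_zero, contProb_zero, add_comm, add_comm (τ.weight)]
  | succ m ih =>
    have h2 := add_le_add (key_ineq ρ σ τ hle m) ih
    have e1 : contProb ρ σ (m + 1) + contProb ρ τ m + (contProb ρ σ m + τ.weight)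
        = contProb ρ σ (m + 1) + τ.weight + (contProb ρ τ m + contProb ρ σ m) := by ring
    have e2 : contProb ρ τ (m + 1) + contProb ρ σ m + (contProb ρ τ m + σ.weight)
        = contProb ρ τ (m + 1) + σ.weight + (contProb ρ τ m + contProb ρ σ m) := by ring
    rw [e1, e2] at h2
    exact (ENNReal.add_le_add_iff_right
      (ENNReal.add_ne_top.mpr ⟨contProb_ne_top ρ τ m, contProb_ne_top ρ σ m⟩)).mp h2

end Aux

/-- A play-measure `σ` is victorious iff for every `x < w(σ)` there is a
victorious play-measure `τ ≤ σ` of weight at least `x`. -/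



theorem stmt_10 {K : Type} {ar : K → Type} (σ : PlayMeasure K ar) :
    Victorious σ ↔
      ∀ x < σ.weight, ∃ τ : PlayMeasure K ar,
        (∀ s k, τ.pass s k ≤ σ.pass s k) ∧ x ≤ τ.weight ∧ Victorious τ := by
  constructor
  · intro hvic x hx
    exact ⟨σ, fun s k => le_rfl, hx.le, hvic⟩
  · intro h ρ
    by_contra hc
    set c := ⨅ m, contProb ρ σ m with hcdef
    have hcw : c ≤ σ.weight := (iInf_le _ 0).trans_eq (contProb_zero ρ σ)
    have hWtop : σ.weight ≠ ∞ := ((σ.le_one .nil).trans_lt ENNReal.one_lt_top).ne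
    have hW0 : σ.weight ≠ 0 := fun h0 => hc (le_antisymm (h0 ▸ hcw) zero_le)
    have hhalf0 : c / 2 ≠ 0 := (ENNReal.div_pos hc (by norm_num)).ne'
    have hhalfW : c / 2 ≤ σ.weight := (ENNReal.half_le_self).trans hcw
    have hhalf_top : c / 2 ≠ ∞ := (hhalfW.trans_lt hWtop.lt_top).ne
    have hx : σ.weight - c / 2 < σ.weight := ENNReal.sub_lt_self hWtop hW0 hhalf0
    obtain ⟨τ, hle, hwt, hvt⟩ := h _ hx
    obtain ⟨m, hm⟩ : ∃ m, contProb ρ τ m < c / 2 := by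
      have hlt : (⨅ m, contProb ρ τ m) < c / 2 := by
        rw [hvt ρ]
        exact pos_iff_ne_zero.mpr hhalf0
      exact iInf_lt_iff.mp hlt
    have chain : c + τ.weight ≤ contProb ρ τ m + σ.weight :=
      (add_le_add_left (iInf_le _ m) _).trans (mixed_ineq ρ σ τ hle m)
    have hstrict : c + τ.weight < c / 2 + σ.weight :=
      chain.trans_lt (ENNReal.add_lt_add_right hWtop hm)
    have hge : c / 2 + σ.weight ≤ c + τ.weight := by
      have e : c / 2 + (σ.weight - c / 2) = σ.weight := add_tsub_cancel_of_le hhalfW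
      calc c / 2 + σ.weight = c / 2 + (c / 2 + (σ.weight - c / 2)) := by rw [e]
        _ = (c / 2 + c / 2) + (σ.weight - c / 2) := by rw [add_assoc]
        _ = c + (σ.weight - c / 2) := by rw [ENNReal.add_halves]
        _ ≤ c + τ.weight := add_le_add_right hwt _
    exact absurd (hstrict.trans_le hge) (lt_irrefl _)
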